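/- Let G be a finite graph and A ⊆ V(G). Then the number of equivalence classes of the relation ≡_G^A on subsets of A is at most 2^{cutrk_G(A)²}. -/

import Mathlib

open scoped Classical

/-- The cut-rank of a vertex subset `X`: the GF(2)-rank of the submatrix of the
adjacency matrix with rows indexed by `X` and columns by its complement. -/
noncomputable def cutRank {V : Type} [Fintype V] (G : SimpleGraph V) (X : Set V) : ℕ :=
  Matrix.rank (Matrix.of fun (x : X) (y : ↥Xᶜ) => if G.Adj x.1 y.1 then (1 : ZMod 2) else 0)

/-- The equivalence relation `≡_G^A` on subsets of `A`: `X ≡_G^A Y` iff every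
vertex `z ∉ A` has a neighbour in `X` exactly when it has a neighbour in `Y`. -/
def nbrSetoid {V : Type} (G : SimpleGraph V) (A : Set V) : Setoid (Set ↥A) where
  r X Y := ∀ z : V, z ∉ A →
    ((∃ x ∈ X, G.Adj z x.1) ↔ (∃ y ∈ Y, G.Adj z y.1))
  iseqv := ⟨fun X z hz => Iff.rfl,
    fun h z hz => (h z hz).symm,
    fun h1 h2 z hz => (h1 z hz).trans (h2 z hz)⟩

lemma count_submodules (W : Type) [AddCommGroup W] [Module (ZMod 2) W] [Finite W] :
    Nat.card (Submodule (ZMod 2) W) ≤ 2 ^ (Module.finrank (ZMod 2) W)^2 := by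
  classical
  set r := Module.finrank (ZMod 2) W
  have hsurj : Function.Surjective
      (fun f : Fin r → W => Submodule.span (ZMod 2) (Set.range f)) := by
    intro S
    have : Module.Finite (ZMod 2) S := Module.Finite.of_finite
    have hd : Module.finrank (ZMod 2) S ≤ r := Submodule.finrank_le S
    let b := Module.finBasis (ZMod 2) S
    refine ⟨fun i => if h : (i : ℕ) < Module.finrank (ZMod 2) S then (b ⟨i, h⟩ : W) else 0, ?_⟩
    apply le_antisymm
    · rw [Submodule.span_le]
      rintro x ⟨i, rfl⟩
      dsimp only
      split
      · exact SetLike.coe_mem _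
      · exact S.zero_mem
    · intro x hx
      have : x ∈ Submodule.map S.subtype ⊤ := ⟨⟨x, hx⟩, trivial, rfl⟩
      rw [← b.span_eq, Submodule.map_span] at this
      refine Submodule.span_mono ?_ this
      rintro y ⟨_, ⟨j, rfl⟩, rfl⟩
      exact ⟨⟨(j : ℕ), lt_of_lt_of_le j.2 hd⟩, by simp [j.2]⟩
  have hcW : Nat.card W = 2 ^ r := by
    have : Nonempty (Fintype W) := ⟨Fintype.ofFinite W⟩
    obtain ⟨inst⟩ := this
    rw [Nat.card_eq_fintype_card]
    have := @Module.card_eq_pow_finrank (ZMod 2) W _ _ _ _ inst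
    simpa [ZMod.card] using this
  calc Nat.card (Submodule (ZMod 2) W) ≤ Nat.card (Fin r → W) :=
        Nat.card_le_card_of_surjective _ hsurj
    _ = (2 ^ r) ^ r := by simp [Nat.card_fun, hcW, Nat.card_eq_fintype_card]
    _ = 2 ^ (r^2) := by rw [← pow_mul, pow_two]

/-- the number of equivalence classes of `≡_G^A` is at most
`2^(cutrk_G(A)²)`. -/
theorem stmt_19 {V : Type} [Fintype V] (G : SimpleGraph V) (A : Set V) :
    Nat.card (Quotient (nbrSetoid G A)) ≤ 2 ^ (cutRank G A ^ 2) := by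
  classical
  set M : Matrix ↥A ↥Aᶜ (ZMod 2) :=
    Matrix.of fun (x : ↥A) (y : ↥Aᶜ) => if G.Adj x.1 y.1 then (1 : ZMod 2) else 0 with hM
  set R : Submodule (ZMod 2) (↥Aᶜ → ZMod 2) := Submodule.span (ZMod 2) (Set.range M) with hR
  -- span of rows of a subset
  set Φ : Set ↥A → Submodule (ZMod 2) (↥Aᶜ → ZMod 2) :=
    fun X => Submodule.span (ZMod 2) (M '' X) with hΦ
  have hΦle : ∀ X, Φ X ≤ R := fun X =>
    Submodule.span_mono (Set.image_subset_range _ _)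
  -- key: equal spans give equivalent sets
  have hkey : ∀ X Y : Set ↥A, Φ X = Φ Y → (nbrSetoid G A).r X Y := by
    intro X Y h z hz
    have hz' : z ∈ Aᶜ := hz
    set zz : ↥Aᶜ := ⟨z, hz'⟩
    have hiff : ∀ T : Set ↥A,
        (∃ x ∈ T, G.Adj z x.1) ↔ ¬ Φ T ≤ LinearMap.ker (LinearMap.proj (R := ZMod 2) zz) := by
      intro T
      rw [hΦ, Submodule.span_le]
      constructor
      · rintro ⟨x, hxT, hadj⟩ hsub
        have := hsub (Set.mem_image_of_mem M hxT)
        simp only [SetLike.mem_coe, LinearMap.mem_ker, LinearMap.proj_apply] at this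
        rw [hM] at this
        simp only [Matrix.of_apply] at this
        rw [if_pos ((G.adj_comm z x.1).mp hadj)] at this
        exact one_ne_zero this
      · intro hns
        by_contra hne
        push_neg at hne
        apply hns
        rintro _ ⟨x, hxT, rfl⟩
        simp only [SetLike.mem_coe, LinearMap.mem_ker, LinearMap.proj_apply]
        rw [hM]
        simp only [Matrix.of_apply]
        rw [if_neg]
        intro hadj
        exact hne x hxT ((G.adj_comm x.1 z).mp hadj)
    rw [hiff X, hiff Y, h]
  -- injection from the quotient into submodules of R
  have hfinR : Finite ↥R := by infer_instance
  set F : Quotient (nbrSetoid G A) → Submodule (ZMod 2) ↥R :=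
    fun q => Submodule.comap R.subtype (Φ q.out) with hF
  have hFinj : Function.Injective F := by
    intro q q' hqq
    have hmap : ∀ X, Submodule.map R.subtype (Submodule.comap R.subtype (Φ X)) = Φ X := by
      intro X
      rw [Submodule.map_comap_eq, Submodule.range_subtype]
      exact inf_eq_right.mpr (hΦle X)
    have : Φ q.out = Φ q'.out := by
      rw [← hmap q.out, ← hmap q'.out, hF] at *
      exact congrArg _ hqq
    calc q = ⟦q.out⟧ := (Quotient.out_eq q).symm
      _ = ⟦q'.out⟧ := Quotient.sound (hkey _ _ this)
      _ = q' := Quotient.out_eq q'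
  have h1 : Nat.card (Quotient (nbrSetoid G A)) ≤ Nat.card (Submodule (ZMod 2) ↥R) :=
    Nat.card_le_card_of_injective F hFinj
  have h2 : Module.finrank (ZMod 2) ↥R = cutRank G A := by
    rw [cutRank, ← hM, Matrix.rank_eq_finrank_span_row, hR]
    rfl
  calc Nat.card (Quotient (nbrSetoid G A)) ≤ Nat.card (Submodule (ZMod 2) ↥R) := h1
    _ ≤ 2 ^ (Module.finrank (ZMod 2) ↥R)^2 := count_submodules _
    _ = 2 ^ (cutRank G A)^2 := by rw [h2]
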